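/- Let b be a holomorphic map of the open unit disk 𝔻 ⊂ ℂ into itself. Then the kernel (z,w) ↦ ((1 + |b(0)|)/(1 − |b(0)|)) · 1/(1 − z·conj(w)) − 1/(1 − b(z)·conj(b(w))) is positive semidefinite on 𝔻. (This is the kernel form of the bound ‖C_b‖² ≤ (1+|b(0)|)/(1−|b(0)|) on H².) -/

import Mathlib

open Complex Metric ComplexConjugate
open scoped ComplexOrder

open intervalIntegral
open scoped Real

noncomputable section


lemma circle_conj (θ : ℝ) : conj (circleMap 0 1 θ) = (circleMap 0 1 θ)⁻¹ := by
  rw [Complex.inv_def]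
  simp [Complex.normSq_eq_norm_sq, norm_circleMap_zero]

lemma circle_ne_zero (θ : ℝ) : circleMap 0 1 θ ≠ 0 := by
  intro h
  have := norm_circleMap_zero 1 θ
  rw [h] at this
  simp at this

lemma circle_norm (θ : ℝ) : ‖circleMap 0 1 θ‖ = 1 := by
  rw [norm_circleMap_zero]; norm_num

lemma one_sub_mul_ne {z w : ℂ} (hz : ‖z‖ < 1) (hw : ‖w‖ ≤ 1) : (1 : ℂ) - z * w ≠ 0 := by
  intro h
  have h1 : z * w = 1 := by linear_combination -h
  have : ‖z * w‖ < 1 := by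
    rw [norm_mul]
    calc ‖z‖ * ‖w‖ ≤ ‖z‖ * 1 := by
          exact mul_le_mul_of_nonneg_left hw (norm_nonneg _)
      _ < 1 := by simpa using hz
  rw [h1] at this; simp at this

lemma cauchy_type {s : ℂ → ℂ} {R : ℝ} (hR : 1 < R)
    (hs : DifferentiableOn ℂ s (ball 0 R)) {z w : ℂ} (hz : z ∈ ball (0:ℂ) 1)
    (hw : w ∈ ball (0:ℂ) 1) :
    ∫ θ in (0:ℝ)..(2*π), s (circleMap 0 1 θ) * (1 - z * conj (circleMap 0 1 θ))⁻¹ *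
      (1 - conj w * circleMap 0 1 θ)⁻¹
      = 2*π * (s z * (1 - z * conj w)⁻¹) := by
  have hzn : ‖z‖ < 1 := by simpa using hz
  have hwn : ‖w‖ < 1 := by simpa using hw
  have hball : closedBall (0:ℂ) 1 ⊆ ball (0:ℂ) 0.99999 ∪ ball 0 R := by
    intro u hu; right
    simp only [mem_closedBall, mem_ball] at *
    linarith
  have hsub : closedBall (0:ℂ) 1 ⊆ ball (0:ℂ) R := fun u hu => by
    simp only [mem_closedBall, mem_ball] at *; linarith
  set g : ℂ → ℂ := fun u => s u * (1 - conj w * u)⁻¹ with hgdef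
  have hne : ∀ u ∈ closedBall (0:ℂ) 1, (1 : ℂ) - conj w * u ≠ 0 := by
    intro u hu
    have : ‖u‖ ≤ 1 := by simpa [mem_closedBall] using hu
    simpa [mul_comm] using one_sub_mul_ne (by simpa using hwn : ‖conj w‖ < 1) this
  have hg : DiffContOnCl ℂ g (ball 0 1) := by
    constructor
    · apply DifferentiableOn.mul
      · exact hs.mono (ball_subset_ball hR.le)
      · apply DifferentiableOn.inv
        · exact (differentiableOn_const 1).sub
            ((differentiableOn_const (conj w)).mul differentiableOn_id)
        · intro u hu; exact hne u (ball_subset_closedBall hu)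
    · rw [closure_ball (0:ℂ) one_ne_zero]
      apply ContinuousOn.mul
      · exact (hs.continuousOn).mono hsub
      · apply ContinuousOn.inv₀
        · exact (continuousOn_const.sub (continuousOn_const.mul continuousOn_id))
        · exact hne
  have key := hg.circleIntegral_sub_inv_smul hz
  simp only [circleIntegral, deriv_circleMap, smul_eq_mul] at key
  have hptw : ∀ θ ∈ Set.uIcc (0:ℝ) (2*π),
      s (circleMap 0 1 θ) * (1 - z * conj (circleMap 0 1 θ))⁻¹ *
        (1 - conj w * circleMap 0 1 θ)⁻¹
      = -I * (circleMap 0 1 θ * I * ((circleMap 0 1 θ - z)⁻¹ * g (circleMap 0 1 θ))) := by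
    intro θ _
    set u := circleMap 0 1 θ
    have hu0 : u ≠ 0 := circle_ne_zero θ
    have huz : u - z ≠ 0 := by
      intro h
      have : ‖u‖ = ‖z‖ := by rw [sub_eq_zero] at h; rw [h]
      rw [circle_norm] at this; rw [← this] at hzn; simp at hzn
    have hA : (1 - z * conj u)⁻¹ = u * (u - z)⁻¹ := by
      rw [circle_conj]
      have h1 : (1 : ℂ) - z * u⁻¹ = (u - z) * u⁻¹ := by field_simp
      rw [h1, mul_inv, inv_inv, mul_comm]
    rw [hA, hgdef]
    simp only []
    ring_nf
    rw [Complex.I_sq]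
    ring
  rw [integral_congr hptw, integral_const_mul, key]
  have : g z = s z * (1 - z * conj w)⁻¹ := by rw [hgdef]; ring_nf
  rw [this]
  ring_nf
  rw [Complex.I_sq]
  ring

lemma integral_double_sum {n : ℕ} (F : Fin n → Fin n → ℝ → ℂ)
    (hF : ∀ i j, IntervalIntegrable (F i j) MeasureTheory.volume 0 (2*π)) :
    ∫ θ in (0:ℝ)..(2*π), ∑ i, ∑ j, F i j θ = ∑ i, ∑ j, ∫ θ in (0:ℝ)..(2*π), F i j θ := by
  have hrow : ∀ i, IntervalIntegrable (fun θ => ∑ j, F i j θ)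
      MeasureTheory.volume 0 (2*π) := by
    intro i
    have h := IntervalIntegrable.sum Finset.univ (fun j (_ : j ∈ Finset.univ) => hF i j)
    have : (∑ j, F i j) = fun θ => ∑ j, F i j θ := by funext θ; simp
    rwa [this] at h
  rw [integral_finset_sum (f := fun i θ => ∑ j, F i j θ) (fun i _ => hrow i)]
  exact Finset.sum_congr rfl fun i _ => integral_finset_sum (fun j _ => hF i j)

set_option maxHeartbeats 1000000 in
lemma pick_core {s : ℂ → ℂ} {R : ℝ} (hR : 1 < R) (hs : DifferentiableOn ℂ s (ball 0 R))
    (hs1 : ∀ θ : ℝ, ‖s (circleMap 0 1 θ)‖ ≤ 1)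
    {n : ℕ} (x : Fin n → ℂ) (hx : ∀ i, x i ∈ ball (0:ℂ) 1) (c : Fin n → ℂ) :
    0 ≤ ∑ i, ∑ j, c i * conj (c j) * (1 - s (x i) * conj (s (x j))) *
      (1 - x i * conj (x j))⁻¹ := by
  have hpi : (0:ℝ) ≤ 2*π := by positivity
  have hxn : ∀ i, ‖x i‖ < 1 := fun i => by simpa using hx i
  set K : Fin n → ℝ → ℂ := fun i θ => (1 - x i * conj (circleMap 0 1 θ))⁻¹ with hK
  have hKcont : ∀ i, Continuous (K i) := by
    intro i
    apply Continuous.inv₀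
    · exact continuous_const.sub (continuous_const.mul
        (Complex.continuous_conj.comp (continuous_circleMap 0 1)))
    · intro θ
      exact one_sub_mul_ne (hxn i) (by rw [RCLike.norm_conj, circle_norm])
  have hscont : Continuous (fun θ => s (circleMap 0 1 θ)) := by
    apply hs.continuousOn.comp_continuous (continuous_circleMap 0 1)
    intro θ
    simp only [mem_ball, dist_zero_right]
    rw [circle_norm]; linarith
  set G : ℝ → ℂ := fun θ => ∑ i, c i * K i θ with hG
  set H : ℝ → ℂ := fun θ => ∑ i, c i * s (x i) * K i θ with hH
  have hGcont : Continuous G := continuous_finset_sum _ fun i _ => continuous_const.mul (hKcont i)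
  have hHcont : Continuous H := continuous_finset_sum _ fun i _ => continuous_const.mul (hKcont i)
  have hconjK : ∀ j θ, conj (K j θ) = (1 - conj (x j) * circleMap 0 1 θ)⁻¹ := by
    intro j θ
    rw [hK]
    simp only [map_inv₀, map_sub, map_one, map_mul, Complex.conj_conj]
  -- identity (1): ∫ K i * conj (K j) = 2π * k i j
  have hI1 : ∀ i j, ∫ θ in (0:ℝ)..(2*π), K i θ * conj (K j θ)
      = 2*π * (1 - x i * conj (x j))⁻¹ := by
    intro i j
    have := cauchy_type (s := fun _ => (1:ℂ)) hR (differentiableOn_const 1)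
      (hx i) (hx j)
    simp only [one_mul] at this
    calc ∫ θ in (0:ℝ)..(2*π), K i θ * conj (K j θ)
        = ∫ θ in (0:ℝ)..(2*π), (1 - x i * conj (circleMap 0 1 θ))⁻¹ *
            (1 - conj (x j) * circleMap 0 1 θ)⁻¹ := by
          apply integral_congr; intro θ _; beta_reduce; rw [hconjK]
      _ = 2*π * (1 - x i * conj (x j))⁻¹ := this
  have hI2 : ∀ i j, ∫ θ in (0:ℝ)..(2*π), s (circleMap 0 1 θ) * (K i θ * conj (K j θ))
      = 2*π * (s (x i) * (1 - x i * conj (x j))⁻¹) := by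
    intro i j
    have := cauchy_type (s := s) hR hs (hx i) (hx j)
    calc ∫ θ in (0:ℝ)..(2*π), s (circleMap 0 1 θ) * (K i θ * conj (K j θ))
        = ∫ θ in (0:ℝ)..(2*π), s (circleMap 0 1 θ) * (1 - x i * conj (circleMap 0 1 θ))⁻¹ *
            (1 - conj (x j) * circleMap 0 1 θ)⁻¹ := by
          apply integral_congr; intro θ _; beta_reduce; rw [hconjK]; ring
      _ = _ := this
  -- expansion of quadratic forms
  have expand : ∀ (d : Fin n → ℂ) (θ : ℝ), (∑ i, d i * K i θ) * conj (∑ j, d j * K j θ)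
      = ∑ i, ∑ j, d i * conj (d j) * (K i θ * conj (K j θ)) := by
    intro d θ
    rw [map_sum, Finset.sum_mul_sum]
    refine Finset.sum_congr rfl fun i _ => Finset.sum_congr rfl fun j _ => ?_
    rw [map_mul]; ring
  have intKK : ∀ i j, IntervalIntegrable (fun θ => K i θ * conj (K j θ))
      MeasureTheory.volume 0 (2*π) :=
    fun i j => ((hKcont i).mul (Complex.continuous_conj.comp (hKcont j))).intervalIntegrable _ _
  have intsKK : ∀ i j, IntervalIntegrable
      (fun θ => s (circleMap 0 1 θ) * (K i θ * conj (K j θ))) MeasureTheory.volume 0 (2*π) :=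
    fun i j => (hscont.mul ((hKcont i).mul
      (Complex.continuous_conj.comp (hKcont j)))).intervalIntegrable _ _
  set A : ℂ := ∑ i, ∑ j, c i * conj (c j) * (1 - x i * conj (x j))⁻¹ with hA
  set B : ℂ := ∑ i, ∑ j, (c i * s (x i)) * conj (c j * s (x j)) * (1 - x i * conj (x j))⁻¹
    with hB
  have h1 : ∫ θ in (0:ℝ)..(2*π), G θ * conj (G θ) = 2*π * A := by
    rw [integral_congr (fun θ _ => expand c θ)]
    rw [integral_double_sum _ (fun i j => (intKK i j).const_mul _)]
    rw [Finset.mul_sum]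
    refine Finset.sum_congr rfl fun i _ => ?_
    rw [Finset.mul_sum]
    refine Finset.sum_congr rfl fun j _ => ?_
    rw [integral_const_mul, hI1 i j]; ring
  have h2 : ∫ θ in (0:ℝ)..(2*π), H θ * conj (H θ) = 2*π * B := by
    have : H = fun θ => ∑ i, (fun i => c i * s (x i)) i * K i θ := rfl
    rw [this]
    rw [integral_congr (fun θ _ => expand (fun i => c i * s (x i)) θ)]
    rw [integral_double_sum _ (fun i j => (intKK i j).const_mul _)]
    rw [Finset.mul_sum]
    refine Finset.sum_congr rfl fun i _ => ?_
    rw [Finset.mul_sum]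
    refine Finset.sum_congr rfl fun j _ => ?_
    rw [integral_const_mul, hI1 i j]; ring
  have h3 : ∫ θ in (0:ℝ)..(2*π), s (circleMap 0 1 θ) * (G θ * conj (H θ)) = 2*π * B := by
    have hexp : ∀ θ ∈ Set.uIcc (0:ℝ) (2*π), s (circleMap 0 1 θ) * (G θ * conj (H θ))
        = ∑ i, ∑ j, (c i * conj (c j * s (x j)))
            * (s (circleMap 0 1 θ) * (K i θ * conj (K j θ))) := by
      intro θ _
      rw [hG, hH]
      simp only [map_sum, map_mul]
      rw [Finset.sum_mul_sum, Finset.mul_sum]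
      refine Finset.sum_congr rfl fun i _ => ?_
      rw [Finset.mul_sum]
      refine Finset.sum_congr rfl fun j _ => ?_
      ring
    rw [integral_congr hexp]
    rw [integral_double_sum _ (fun i j => (intsKK i j).const_mul _)]
    rw [Finset.mul_sum]
    refine Finset.sum_congr rfl fun i _ => ?_
    rw [Finset.mul_sum]
    refine Finset.sum_congr rfl fun j _ => ?_
    rw [integral_const_mul, hI2 i j, map_mul]; ring
  -- real integrals
  set a : ℝ := ∫ θ in (0:ℝ)..(2*π), Complex.normSq (G θ) with ha
  set bb : ℝ := ∫ θ in (0:ℝ)..(2*π), Complex.normSq (H θ) with hbb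
  have haA : (a:ℂ) = 2*π * A := by
    rw [ha, ← intervalIntegral.integral_ofReal, ← h1]
    exact integral_congr fun θ _ => (Complex.mul_conj _).symm
  have hbB : (bb:ℂ) = 2*π * B := by
    rw [hbb, ← intervalIntegral.integral_ofReal, ← h2]
    exact integral_congr fun θ _ => (Complex.mul_conj _).symm
  have ha0 : 0 ≤ a := integral_nonneg hpi fun θ _ => Complex.normSq_nonneg _
  have hb0 : 0 ≤ bb := integral_nonneg hpi fun θ _ => Complex.normSq_nonneg _
  -- key inequality bb ≤ a
  have hba : bb ≤ a := by
    have hbre : bb = (∫ θ in (0:ℝ)..(2*π), s (circleMap 0 1 θ) * (G θ * conj (H θ))).re := by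
      rw [h3, ← hbB, Complex.ofReal_re]
    have step1 : bb ≤ ∫ θ in (0:ℝ)..(2*π), ‖s (circleMap 0 1 θ) * (G θ * conj (H θ))‖ := by
      rw [hbre]
      refine le_trans (Complex.re_le_norm _) ?_
      exact norm_integral_le_integral_norm hpi
    have step2 : ∫ θ in (0:ℝ)..(2*π), ‖s (circleMap 0 1 θ) * (G θ * conj (H θ))‖
        ≤ ∫ θ in (0:ℝ)..(2*π), (Complex.normSq (G θ) + Complex.normSq (H θ))/2 := by
      apply integral_mono_on hpi
      · exact ((hscont.mul (hGcont.mul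
          (Complex.continuous_conj.comp hHcont))).norm).intervalIntegrable _ _
      · have cG : Continuous fun θ => Complex.normSq (G θ) :=
          Complex.continuous_normSq.comp hGcont
        have cH : Continuous fun θ => Complex.normSq (H θ) :=
          Complex.continuous_normSq.comp hHcont
        exact ((cG.add cH).div_const 2).intervalIntegrable _ _
      · intro θ _
        have h1' : ‖s (circleMap 0 1 θ) * (G θ * conj (H θ))‖ ≤ ‖G θ‖ * ‖H θ‖ := by
          rw [norm_mul, norm_mul, RCLike.norm_conj]
          calc ‖s (circleMap 0 1 θ)‖ * (‖G θ‖ * ‖H θ‖)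
              ≤ 1 * (‖G θ‖ * ‖H θ‖) := by
                apply mul_le_mul_of_nonneg_right (hs1 θ) (by positivity)
            _ = ‖G θ‖ * ‖H θ‖ := one_mul _
        refine h1'.trans ?_
        rw [Complex.normSq_eq_norm_sq, Complex.normSq_eq_norm_sq]
        nlinarith [sq_nonneg (‖G θ‖ - ‖H θ‖), norm_nonneg (G θ), norm_nonneg (H θ)]
    have step3 : ∫ θ in (0:ℝ)..(2*π), (Complex.normSq (G θ) + Complex.normSq (H θ))/2
        = (a + bb)/2 := by
      have cG : Continuous fun θ => Complex.normSq (G θ) :=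
        Complex.continuous_normSq.comp hGcont
      have cH : Continuous fun θ => Complex.normSq (H θ) :=
        Complex.continuous_normSq.comp hHcont
      rw [intervalIntegral.integral_div, intervalIntegral.integral_add
        (cG.intervalIntegrable _ _) (cH.intervalIntegrable _ _)]
    linarith [step1.trans (step2.trans_eq step3)]
  -- conclude
  have hsplit : (∑ i, ∑ j, c i * conj (c j) * (1 - s (x i) * conj (s (x j))) *
      (1 - x i * conj (x j))⁻¹) = A - B := by
    rw [hA, hB, ← Finset.sum_sub_distrib]
    refine Finset.sum_congr rfl fun i _ => ?_
    rw [← Finset.sum_sub_distrib]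
    refine Finset.sum_congr rfl fun j _ => ?_
    rw [map_mul]; ring
  rw [hsplit]
  have h2pi : (2*(π:ℂ)) ≠ 0 := by
    simp [Real.pi_ne_zero, Complex.ofReal_ne_zero]
  have hfin : A - B = ((( a - bb)/(2*π) : ℝ) : ℂ) := by
    push_cast
    rw [eq_div_iff h2pi]
    linear_combination -haA + hbB
  rw [hfin, Complex.zero_le_real]
  apply div_nonneg (by linarith) (by positivity)

lemma pick {s : ℂ → ℂ} (hs : DifferentiableOn ℂ s (ball 0 1))
    (hs1 : ∀ z ∈ ball (0:ℂ) 1, ‖s z‖ ≤ 1)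
    {n : ℕ} (x : Fin n → ℂ) (hx : ∀ i, x i ∈ ball (0:ℂ) 1) (c : Fin n → ℂ) :
    0 ≤ ∑ i, ∑ j, c i * conj (c j) * (1 - s (x i) * conj (s (x j))) *
      (1 - x i * conj (x j))⁻¹ := by
  rcases Nat.eq_zero_or_pos n with hn | hn
  · subst hn; simp
  have : NeZero n := ⟨hn.ne'⟩
  have hxn : ∀ i, ‖x i‖ < 1 := fun i => by simpa using hx i
  set m : ℝ := Finset.univ.sup' (Finset.univ_nonempty) (fun i => ‖x i‖) with hm
  have hm1 : m < 1 := by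
    rw [hm, Finset.sup'_lt_iff]
    exact fun i _ => hxn i
  have hm0 : 0 ≤ m := by
    obtain ⟨i⟩ := (inferInstance : Nonempty (Fin n))
    have h := Finset.le_sup' (f := fun i => ‖x i‖) (b := i) (Finset.mem_univ i)
    rw [hm]
    exact le_trans (norm_nonneg (x i)) h
  set f : ℝ → ℂ := fun r => ∑ i, ∑ j, c i * conj (c j) *
    (1 - s (x i) * conj (s (x j))) * (1 - (x i / (r:ℂ)) * conj (x j / (r:ℂ)))⁻¹ with hf
  have hpos : ∀ r ∈ Set.Ioo m 1, 0 ≤ f r := by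
    intro r hr
    have hr0 : (0:ℝ) < r := lt_of_le_of_lt hm0 hr.1
    have hrC : ((r:ℂ)) ≠ 0 := by exact_mod_cast hr0.ne'
    have hR : 1 < 1/r := by
      rw [lt_div_iff₀ hr0]; simpa using hr.2
    have hdiff : DifferentiableOn ℂ (fun z => s ((r:ℂ) * z)) (ball 0 (1/r)) := by
      apply DifferentiableOn.comp hs
      · exact (differentiable_id.const_mul _).differentiableOn
      · intro z hz
        simp only [mem_ball, dist_zero_right] at *
        rw [norm_mul, Complex.norm_real, Real.norm_of_nonneg hr0.le]
        calc r * ‖z‖ < r * (1/r) := by exact mul_lt_mul_of_pos_left hz hr0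
          _ = 1 := by field_simp
    have hcirc : ∀ θ : ℝ, ‖s ((r:ℂ) * circleMap 0 1 θ)‖ ≤ 1 := by
      intro θ
      apply hs1
      simp only [mem_ball, dist_zero_right]
      rw [norm_mul, Complex.norm_real, Real.norm_of_nonneg hr0.le]
      have : ‖circleMap 0 1 θ‖ = 1 := by
        rw [norm_circleMap_zero]; norm_num
      rw [this, mul_one]; exact hr.2
    have hy : ∀ i, x i / (r:ℂ) ∈ ball (0:ℂ) 1 := by
      intro i
      simp only [mem_ball, dist_zero_right]
      rw [norm_div, Complex.norm_real, Real.norm_of_nonneg hr0.le, div_lt_one hr0]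
      exact lt_of_le_of_lt (Finset.le_sup' (fun i => ‖x i‖) (Finset.mem_univ i)) hr.1
    have hcore := pick_core hR hdiff hcirc (fun i => x i / (r:ℂ)) hy c
    have hxr : ∀ i, (r:ℂ) * (x i / (r:ℂ)) = x i := fun i => by field_simp
    rw [hf]
    convert hcore using 4 with i _ j _
    rw [hxr i, hxr j]
  -- limit as r → 1⁻
  have hcont : Filter.Tendsto f (nhds (1:ℝ)) (nhds (f 1)) := by
    have hf1eq : f 1 = ∑ i, ∑ j, (fun r : ℝ => c i * conj (c j) *
        (1 - s (x i) * conj (s (x j))) * (1 - (x i / (r:ℂ)) * conj (x j / (r:ℂ)))⁻¹) 1 := rfl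
    rw [hf1eq, hf]
    refine tendsto_finset_sum _ fun i _ => tendsto_finset_sum _ fun j _ => ?_
    have hent : ContinuousAt (fun r : ℝ => c i * conj (c j) *
        (1 - s (x i) * conj (s (x j))) * (1 - (x i / (r:ℂ)) * conj (x j / (r:ℂ)))⁻¹) 1 := by
      apply ContinuousAt.mul continuousAt_const
      apply ContinuousAt.inv₀
      · apply ContinuousAt.sub continuousAt_const
        apply ContinuousAt.mul
        · exact (continuousAt_const.div (Complex.continuous_ofReal.continuousAt)
            (by simp))
        · exact Complex.continuous_conj.continuousAt.comp
            (continuousAt_const.div (Complex.continuous_ofReal.continuousAt)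
              (by simp))
      · simp only [Complex.ofReal_one, div_one]
        exact one_sub_mul_ne (hxn i) (by rw [RCLike.norm_conj]; exact (hxn j).le)
    exact hent.tendsto
  have hf1 : f 1 = ∑ i, ∑ j, c i * conj (c j) * (1 - s (x i) * conj (s (x j))) *
      (1 - x i * conj (x j))⁻¹ := by
    rw [hf]; simp
  have hev : ∀ᶠ r in nhdsWithin (1:ℝ) (Set.Iio 1), 0 ≤ f r := by
    filter_upwards [Ioo_mem_nhdsLT_of_mem ⟨hm1, le_refl 1⟩] with r hr
    exact hpos r hr
  have htend : Filter.Tendsto f (nhdsWithin (1:ℝ) (Set.Iio 1)) (nhds (f 1)) :=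
    hcont.mono_left nhdsWithin_le_nhds
  have hre : 0 ≤ (f 1).re := by
    apply ge_of_tendsto ((Complex.continuous_re.continuousAt.tendsto).comp htend)
    filter_upwards [hev] with r hr
    exact (Complex.nonneg_iff.mp hr).1
  have him : (f 1).im = 0 := by
    have h1 : Filter.Tendsto (fun r => (f r).im) (nhdsWithin (1:ℝ) (Set.Iio 1))
        (nhds (f 1).im) := (Complex.continuous_im.continuousAt.tendsto).comp htend
    have h2 : Filter.Tendsto (fun r => (f r).im) (nhdsWithin (1:ℝ) (Set.Iio 1))
        (nhds 0) := by
      apply Filter.Tendsto.congr' _ tendsto_const_nhds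
      filter_upwards [hev] with r hr
      exact (Complex.nonneg_iff.mp hr).2
    exact tendsto_nhds_unique h1 h2
  rw [← hf1, Complex.nonneg_iff]
  exact ⟨hre, him.symm⟩

lemma tsum_nonneg_c {f : ℕ → ℂ} (hsum : Summable f) (h : ∀ m, 0 ≤ f m) : 0 ≤ ∑' m, f m := by
  rw [Complex.nonneg_iff]
  constructor
  · rw [Complex.re_tsum hsum]
    exact tsum_nonneg fun m => (Complex.nonneg_iff.mp (h m)).1
  · rw [Complex.im_tsum hsum]
    symm
    calc ∑' m, (f m).im = ∑' m, (0:ℝ) := by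
          exact tsum_congr fun m => ((Complex.nonneg_iff.mp (h m)).2).symm
      _ = 0 := tsum_zero


/-- A kernel `K : X → X → ℂ` is positive semidefinite on a set `S`: for all finite
families of points of `S` and scalars, the associated quadratic form is a
nonnegative real number (using the partial order on `ℂ`). -/
def IsPSDKernelOn {X : Type*} (K : X → X → ℂ) (S : Set X) : Prop :=
  ∀ (n : ℕ) (x : Fin n → X), (∀ i, x i ∈ S) → ∀ c : Fin n → ℂ,
    0 ≤ ∑ i, ∑ j, c i * conj (c j) * K (x i) (x j)
set_option maxHeartbeats 1600000 in
/-- Kernel form of the bound `‖C_b‖² ≤ (1+|b(0)|)/(1−|b(0)|)` on `H²`: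
the kernel `((1+|b(0)|)/(1−|b(0)|))·k(z,w) − k(b(z),b(w))` is positive
semidefinite, where `k` is the Szegő kernel. -/
theorem composition_norm_bound_kernel_psd
    (b : ℂ → ℂ)
    (hb_holo : DifferentiableOn ℂ b (ball (0 : ℂ) 1))
    (hb_maps : ∀ z ∈ ball (0 : ℂ) 1, b z ∈ ball (0 : ℂ) 1) :
    IsPSDKernelOn
      (fun z w => (((1 + ‖b 0‖) / (1 - ‖b 0‖) : ℝ) : ℂ) * (1 - z * conj w)⁻¹ -
        (1 - b z * conj (b w))⁻¹)
      (ball (0 : ℂ) 1) := by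
  intro n xs hxs c
  show 0 ≤ ∑ i, ∑ j, c i * conj (c j) *
    ((((1 + ‖b 0‖) / (1 - ‖b 0‖) : ℝ) : ℂ) * (1 - xs i * conj (xs j))⁻¹ -
      (1 - b (xs i) * conj (b (xs j)))⁻¹)
  have h0mem : (0:ℂ) ∈ ball (0:ℂ) 1 := mem_ball_self one_pos
  have ha1 : ‖b 0‖ < 1 := by simpa using hb_maps 0 h0mem
  set a := b 0 with ha
  have hb1 : ∀ z ∈ ball (0:ℂ) 1, ‖b z‖ < 1 := fun z hz => by simpa using hb_maps z hz
  have hxn : ∀ i, ‖xs i‖ < 1 := fun i => by simpa using hxs i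
  have hk_ne : ∀ z w : ℂ, ‖z‖ < 1 → ‖w‖ < 1 → (1:ℂ) - z * conj w ≠ 0 := fun z w h1 h2 =>
    one_sub_mul_ne h1 (by rw [RCLike.norm_conj]; exact h2.le)
  have hden : ∀ z ∈ ball (0:ℂ) 1, (1:ℂ) - conj a * b z ≠ 0 := fun z hz =>
    one_sub_mul_ne (by rw [RCLike.norm_conj]; exact ha1) (hb1 z hz).le
  set ψ : ℂ → ℂ := fun z => (a - b z) * (1 - conj a * b z)⁻¹ with hψdef
  have hψmem : ∀ z ∈ ball (0:ℂ) 1, ‖ψ z‖ < 1 := by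
    intro z hz
    have key : Complex.normSq (a - b z) < Complex.normSq (1 - conj a * b z) := by
      have e1 : Complex.normSq (1 - conj a * b z) - Complex.normSq (a - b z)
          = (1 - Complex.normSq a) * (1 - Complex.normSq (b z)) := by
        rw [Complex.normSq_sub, Complex.normSq_sub, Complex.normSq_one, Complex.normSq_mul,
          Complex.normSq_conj]
        have e2 : ((1:ℂ) * conj (conj a * b z)).re = (a * conj (b z)).re := by
          rw [one_mul, map_mul, Complex.conj_conj]
        rw [e2]; ring
      have h2 : 0 < (1 - Complex.normSq a) * (1 - Complex.normSq (b z)) := by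
        have n1 : Complex.normSq a < 1 := by
          rw [Complex.normSq_eq_norm_sq]
          nlinarith [norm_nonneg a]
        have n2 : Complex.normSq (b z) < 1 := by
          rw [Complex.normSq_eq_norm_sq]
          nlinarith [norm_nonneg (b z), hb1 z hz]
        have := mul_pos (by linarith : (0:ℝ) < 1 - Complex.normSq a)
          (by linarith : (0:ℝ) < 1 - Complex.normSq (b z))
        linarith
      linarith
    have hpos : 0 < ‖(1:ℂ) - conj a * b z‖ := norm_pos_iff.mpr (hden z hz)
    have hnorm : ‖a - b z‖ < ‖(1:ℂ) - conj a * b z‖ := by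
      have h1 : ‖a - b z‖^2 < ‖(1:ℂ) - conj a * b z‖^2 := by
        rw [← Complex.normSq_eq_norm_sq, ← Complex.normSq_eq_norm_sq]
        exact key
      nlinarith [norm_nonneg (a - b z), norm_nonneg ((1:ℂ) - conj a * b z)]
    rw [hψdef]
    simp only []
    rw [norm_mul, norm_inv, ← div_eq_mul_inv, div_lt_one hpos]
    exact hnorm
  have hψ0 : ψ 0 = 0 := by rw [hψdef]; simp [← ha]
  have hψdiff : DifferentiableOn ℂ ψ (ball 0 1) :=
    ((differentiableOn_const a).sub hb_holo).mul
      (((differentiableOn_const 1).sub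
        ((differentiableOn_const (conj a)).mul hb_holo)).inv (fun z hz => hden z hz))
  have hψmapsTo : Set.MapsTo ψ (ball (0:ℂ) 1) (ball (ψ 0) 1) := by
    rw [hψ0]
    intro z hz
    simpa using hψmem z hz
  set s := dslope ψ 0 with hsdef
  have hsdiff : DifferentiableOn ℂ s (ball 0 1) :=
    (Complex.differentiableOn_dslope (isOpen_ball.mem_nhds h0mem)).mpr hψdiff
  have hs1 : ∀ z ∈ ball (0:ℂ) 1, ‖s z‖ ≤ 1 := fun z hz => by
    simpa using Complex.norm_dslope_le_div_of_mapsTo_ball hψdiff (hψmapsTo.mono_right ball_subset_closedBall) hz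
  have hzs : ∀ z : ℂ, z * s z = ψ z := fun z => by
    have h := sub_smul_dslope ψ 0 z
    rw [sub_zero, smul_eq_mul, hψ0, sub_zero] at h
    rw [hsdef]
    exact h
  set τ := Real.sqrt (1 - ‖a‖^2) with hτdef
  set M := Real.sqrt ((1 + ‖a‖)/(1 - ‖a‖)) with hMdef
  have hapos : (0:ℝ) < (1 + ‖a‖)/(1 - ‖a‖) := by
    apply div_pos (by linarith [norm_nonneg a]) (by linarith)
  have hMpos : 0 < M := Real.sqrt_pos.mpr hapos
  have hMne : ((M:ℝ):ℂ) ≠ 0 := by exact_mod_cast hMpos.ne'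
  have hM2 : (((1 + ‖a‖)/(1 - ‖a‖) : ℝ) : ℂ) = (M:ℂ) * M := by
    rw [← Complex.ofReal_mul, Real.mul_self_sqrt hapos.le]
  have hτM : τ = M * (1 - ‖a‖) := by
    have hne1 : (1:ℝ) - ‖a‖ ≠ 0 := by linarith
    have hsq : (M * (1 - ‖a‖))^2 = 1 - ‖a‖^2 := by
      rw [mul_pow, hMdef, Real.sq_sqrt hapos.le, div_mul_eq_mul_div,
        mul_div_assoc, sq, mul_div_assoc, div_self hne1, mul_one]
      ring
    have h2 : M * (1 - ‖a‖) = Real.sqrt ((M * (1 - ‖a‖))^2) :=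
      (Real.sqrt_sq (mul_nonneg hMpos.le (by linarith))).symm
    rw [hτdef, h2, hsq]
  set F : ℂ → ℂ := fun z => (τ:ℂ) * (1 - conj a * b z)⁻¹ with hFdef
  have hFnorm : ∀ z ∈ ball (0:ℂ) 1, ‖F z‖ ≤ M := by
    intro z hz
    have hlow : 1 - ‖a‖ ≤ ‖(1:ℂ) - conj a * b z‖ := by
      have h1 : ‖conj a * b z‖ ≤ ‖a‖ := by
        rw [norm_mul, RCLike.norm_conj]
        calc ‖a‖ * ‖b z‖ ≤ ‖a‖ * 1 :=
              mul_le_mul_of_nonneg_left (hb1 z hz).le (norm_nonneg a)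
          _ = ‖a‖ := mul_one _
      calc 1 - ‖a‖ ≤ ‖(1:ℂ)‖ - ‖conj a * b z‖ := by rw [norm_one]; linarith
        _ ≤ ‖(1:ℂ) - conj a * b z‖ := norm_sub_norm_le _ _
    have hτ0 : 0 ≤ τ := Real.sqrt_nonneg _
    rw [hFdef]
    simp only []
    rw [norm_mul, Complex.norm_real, Real.norm_of_nonneg hτ0, norm_inv]
    rw [← div_eq_mul_inv, div_le_iff₀ (lt_of_lt_of_le (by linarith) hlow)]
    calc τ = M * (1 - ‖a‖) := hτM
      _ ≤ M * ‖(1:ℂ) - conj a * b z‖ := mul_le_mul_of_nonneg_left hlow hMpos.le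
  set g : ℂ → ℂ := fun z => F z * ((M:ℝ):ℂ)⁻¹ with hgdef
  have hgdiff : DifferentiableOn ℂ g (ball 0 1) := by
    apply DifferentiableOn.mul _ (differentiableOn_const _)
    rw [hFdef]
    exact (differentiableOn_const _).mul
      (((differentiableOn_const 1).sub
        ((differentiableOn_const (conj a)).mul hb_holo)).inv (fun z hz => hden z hz))
  have hg1 : ∀ z ∈ ball (0:ℂ) 1, ‖g z‖ ≤ 1 := by
    intro z hz
    rw [hgdef]
    simp only []
    rw [norm_mul, norm_inv, Complex.norm_real, Real.norm_of_nonneg hMpos.le]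
    rw [← div_eq_mul_inv, div_le_one hMpos]
    exact hFnorm z hz
  have hτ2 : (τ:ℂ) * τ = 1 - a * conj a := by
    rw [← Complex.ofReal_mul, Real.mul_self_sqrt (by nlinarith [norm_nonneg a])]
    rw [Complex.mul_conj]
    have : Complex.normSq a = ‖a‖^2 := by
      rw [Complex.normSq_eq_norm_sq]
    rw [this]
    push_cast
    ring
  -- the key kernel identity via the Möbius transform
  have hstar : ∀ z ∈ ball (0:ℂ) 1, ∀ w ∈ ball (0:ℂ) 1,
      (1 - b z * conj (b w))⁻¹ = F z * conj (F w) * (1 - ψ z * conj (ψ w))⁻¹ := by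
    intro z hz w hw
    have d1 : (1:ℂ) - conj a * b z ≠ 0 := hden z hz
    have d2 : (1:ℂ) - a * conj (b w) ≠ 0 :=
      one_sub_mul_ne ha1 (by rw [RCLike.norm_conj]; exact (hb1 w hw).le)
    have dk : (1:ℂ) - b z * conj (b w) ≠ 0 := hk_ne _ _ (hb1 z hz) (hb1 w hw)
    have dψ : (1:ℂ) - ψ z * conj (ψ w) ≠ 0 := hk_ne _ _ (hψmem z hz) (hψmem w hw)
    have hconjF : conj (F w) = (τ:ℂ) * (1 - a * conj (b w))⁻¹ := by
      rw [hFdef]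
      simp only []
      rw [map_mul, map_inv₀, map_sub, map_one, map_mul, Complex.conj_conj,
        Complex.conj_ofReal]
    have hconjψ : conj (ψ w) = (conj a - conj (b w)) * (1 - a * conj (b w))⁻¹ := by
      rw [hψdef]
      simp only []
      rw [map_mul, map_inv₀, map_sub, map_sub, map_one, map_mul, Complex.conj_conj]
    have hτpos : 0 < τ := Real.sqrt_pos.mpr (by nlinarith [norm_nonneg a])
    have hττ : ((τ:ℝ):ℂ) ≠ 0 := by exact_mod_cast hτpos.ne'
    rw [hconjF, hconjψ, hψdef, hFdef]
    simp only []
    have d3 : (1:ℂ) - b z * conj a ≠ 0 := by rw [mul_comm]; exact d1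
    have d4 : (1:ℂ) - conj (b w) * a ≠ 0 := by rw [mul_comm]; exact d2
    have hD : (1:ℂ) - ((a - b z) * (1 - conj a * b z)⁻¹) *
        ((conj a - conj (b w)) * (1 - a * conj (b w))⁻¹)
        = (((1 - conj a * b z) * (1 - a * conj (b w))) - (a - b z) * (conj a - conj (b w)))
          * ((1 - conj a * b z)⁻¹ * (1 - a * conj (b w))⁻¹) := by
      field_simp
    have hkey : ((1:ℂ) - conj a * b z) * (1 - a * conj (b w))
        - (a - b z) * (conj a - conj (b w))
        = ((τ:ℂ) * τ) * (1 - b z * conj (b w)) := by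
      linear_combination (b z * conj (b w) - 1) * hτ2
    rw [hD, hkey]
    field_simp
  -- Littlewood pairwise identity
  have hlit : ∀ z ∈ ball (0:ℂ) 1, ∀ w ∈ ball (0:ℂ) 1,
      (1 - z * conj w)⁻¹ - (1 - ψ z * conj (ψ w))⁻¹
        = (z * conj w * (1 - s z * conj (s w))) *
          ((1 - z * conj w)⁻¹ * (1 - ψ z * conj (ψ w))⁻¹) := by
    intro z hz w hw
    have d1 : (1:ℂ) - z * conj w ≠ 0 := hk_ne z w (by simpa using hz) (by simpa using hw)
    have d2 : (1:ℂ) - ψ z * conj (ψ w) ≠ 0 := hk_ne _ _ (hψmem z hz) (hψmem w hw)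
    have hxy : ψ z * conj (ψ w) = z * conj w * (s z * conj (s w)) := by
      rw [← hzs z, ← hzs w, map_mul]
      ring
    have base : (1 - z * conj w)⁻¹ - (1 - ψ z * conj (ψ w))⁻¹
        = ((z * conj w) - ψ z * conj (ψ w)) *
          ((1 - z * conj w)⁻¹ * (1 - ψ z * conj (ψ w))⁻¹) := by
      field_simp
      ring
    rw [base, hxy]
    ring
  -- assembly of the quadratic form
  set e : Fin n → ℂ := fun i => c i * F (xs i) with hedef
  have hconjg : ∀ w, conj (g w) = conj (F w) * (((M:ℝ)):ℂ)⁻¹ := fun w => by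
    rw [hgdef]
    simp only []
    rw [map_mul, map_inv₀, Complex.conj_ofReal]
  have key : ∀ i j, c i * conj (c j) *
      ((((1 + ‖a‖) / (1 - ‖a‖) : ℝ) : ℂ) * (1 - xs i * conj (xs j))⁻¹ -
        (1 - b (xs i) * conj (b (xs j)))⁻¹)
      = (M:ℂ) * M * (c i * conj (c j) * (1 - g (xs i) * conj (g (xs j))) *
          (1 - xs i * conj (xs j))⁻¹)
        + (e i * conj (e j)) * ((1 - xs i * conj (xs j))⁻¹ -
            (1 - ψ (xs i) * conj (ψ (xs j)))⁻¹) := by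
    intro i j
    have hMinv : (M:ℂ) * ((M:ℝ):ℂ)⁻¹ = 1 := mul_inv_cancel₀ hMne
    have hgF : g (xs i) = F (xs i) * ((M:ℝ):ℂ)⁻¹ := rfl
    rw [hstar _ (hxs i) _ (hxs j), hM2, hconjg, hgF]
    simp only [hedef, map_mul]
    linear_combination (c i * conj (c j) * F (xs i) * conj (F (xs j)) *
      (1 - xs i * conj (xs j))⁻¹ * ((M:ℂ) * ((M:ℝ):ℂ)⁻¹ + 1)) * hMinv
  have hsplit : (∑ i, ∑ j, c i * conj (c j) *
      ((((1 + ‖a‖) / (1 - ‖a‖) : ℝ) : ℂ) * (1 - xs i * conj (xs j))⁻¹ -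
        (1 - b (xs i) * conj (b (xs j)))⁻¹))
      = (M:ℂ) * M * (∑ i, ∑ j, c i * conj (c j) * (1 - g (xs i) * conj (g (xs j))) *
          (1 - xs i * conj (xs j))⁻¹)
        + ∑ i, ∑ j, (e i * conj (e j)) * ((1 - xs i * conj (xs j))⁻¹ -
            (1 - ψ (xs i) * conj (ψ (xs j)))⁻¹) := by
    rw [Finset.mul_sum, ← Finset.sum_add_distrib]
    refine Finset.sum_congr rfl fun i _ => ?_
    rw [Finset.mul_sum, ← Finset.sum_add_distrib]
    exact Finset.sum_congr rfl fun j _ => key i j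
  rw [hsplit]
  apply add_nonneg
  · apply mul_nonneg _ (pick hgdiff hg1 xs hxs c)
    rw [show ((M:ℝ):ℂ) * M = (((M*M : ℝ)):ℂ) by push_cast; ring]
    exact Complex.zero_le_real.mpr (by positivity)
  · set q : Fin n → Fin n → ℂ := fun i j => ψ (xs i) * conj (ψ (xs j)) with hqdef
    have hqlt : ∀ i j, ‖q i j‖ < 1 := by
      intro i j
      rw [hqdef]
      simp only []
      rw [norm_mul, RCLike.norm_conj]
      nlinarith [hψmem _ (hxs i), hψmem _ (hxs j), norm_nonneg (ψ (xs i)),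
        norm_nonneg (ψ (xs j))]
    set coeff : Fin n → Fin n → ℂ := fun i j => e i * conj (e j) * (xs i * conj (xs j)) *
      (1 - s (xs i) * conj (s (xs j))) * (1 - xs i * conj (xs j))⁻¹ with hcdef
    have hsumm : ∀ i j, Summable (fun m : ℕ => coeff i j * q i j ^ m) :=
      fun i j => (summable_geometric_of_norm_lt_one (hqlt i j)).mul_left _
    have hterm : ∀ i j, (e i * conj (e j)) * ((1 - xs i * conj (xs j))⁻¹ -
        (1 - ψ (xs i) * conj (ψ (xs j)))⁻¹) = ∑' m : ℕ, coeff i j * q i j ^ m := by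
      intro i j
      rw [tsum_mul_left, tsum_geometric_of_norm_lt_one (hqlt i j)]
      rw [hlit _ (hxs i) _ (hxs j), hcdef, hqdef]
      ring
    have swap : ∑ i, ∑ j, (e i * conj (e j)) * ((1 - xs i * conj (xs j))⁻¹ -
        (1 - ψ (xs i) * conj (ψ (xs j)))⁻¹)
        = ∑' m : ℕ, ∑ i, ∑ j, coeff i j * q i j ^ m := by
      calc ∑ i, ∑ j, (e i * conj (e j)) * ((1 - xs i * conj (xs j))⁻¹ -
          (1 - ψ (xs i) * conj (ψ (xs j)))⁻¹)
          = ∑ i, ∑ j, ∑' m : ℕ, coeff i j * q i j ^ m :=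
            Finset.sum_congr rfl fun i _ => Finset.sum_congr rfl fun j _ => hterm i j
        _ = ∑ i, ∑' m : ℕ, ∑ j, coeff i j * q i j ^ m :=
            Finset.sum_congr rfl fun i _ => (Summable.tsum_finsetSum (fun j _ => hsumm i j)).symm
        _ = ∑' m : ℕ, ∑ i, ∑ j, coeff i j * q i j ^ m :=
            (Summable.tsum_finsetSum (fun i _ => summable_sum (fun j _ => hsumm i j))).symm
    rw [swap]
    apply tsum_nonneg_c
    · exact summable_sum (fun i _ => summable_sum (fun j _ => hsumm i j))
    · intro m
      have hp := pick hsdiff hs1 xs hxs (fun i => e i * xs i * (ψ (xs i))^m)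
      refine hp.trans_eq ?_
      refine Finset.sum_congr rfl fun i _ => Finset.sum_congr rfl fun j _ => ?_
      rw [hcdef, hqdef]
      simp only [map_mul, map_pow, mul_pow]
      ring
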